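/- Let ω ∈ KL. Then there exists Ω ∈ KL such that sup_{0 ≤ τ ≤ t} ω(ω(r,τ), t−τ) ≤ Ω(r,t) for all r,t ≥ 0. -/

import Mathlib

open Set Filter

/-- A class-`KL` function `[0,∞)² → [0,∞)`: continuous, of class `K` in the first argument
for each fixed second argument, and non-increasing with limit `0` at infinity in the second
argument for each fixed first argument. -/
def IsKL (f : ℝ → ℝ → ℝ) : Prop :=
  ContinuousOn (fun p : ℝ × ℝ => f p.1 p.2) (Ici 0 ×ˢ Ici 0) ∧
  (∀ t ∈ Ici (0:ℝ), StrictMonoOn (fun s => f s t) (Ici 0) ∧ f 0 t = 0) ∧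
  (∀ s ∈ Ici (0:ℝ), ∀ t ∈ Ici (0:ℝ), 0 ≤ f s t) ∧
  (∀ s ∈ Ici (0:ℝ), AntitoneOn (fun t => f s t) (Ici 0) ∧
    Tendsto (fun t => f s t) atTop (nhds 0))

/-- For any `ω ∈ KL` there exists `Ω ∈ KL` dominating the composed estimate:
`sup_{0 ≤ τ ≤ t} ω(ω(r,τ), t−τ) ≤ Ω(r,t)` for all `r,t ≥ 0`. -/
theorem stmt11 (ω : ℝ → ℝ → ℝ) (hω : IsKL ω) :
    ∃ Ω : ℝ → ℝ → ℝ, IsKL Ω ∧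
      ∀ r ∈ Ici (0:ℝ), ∀ t ∈ Ici (0:ℝ), ∀ τ ∈ Icc (0:ℝ) t,
        ω (ω r τ) (t - τ) ≤ Ω r t := by
  obtain ⟨hcont, hK, hnn, hL⟩ := hω
  have m0 : (0:ℝ) ∈ Ici (0:ℝ) := self_mem_Ici
  have mi : ∀ {x : ℝ}, 0 ≤ x → x ∈ Ici (0:ℝ) := fun h => mem_Ici.mpr h
  refine ⟨fun r t => ω (ω r 0) (t/2) + ω (ω r (t/2)) 0, ⟨?_, ?_, ?_, ?_⟩, ?_⟩
  · -- continuity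
    have h1 : ContinuousOn (fun p : ℝ × ℝ => ω (ω p.1 0) (p.2/2)) (Ici 0 ×ˢ Ici 0) := by
      have hg : ContinuousOn (fun p : ℝ × ℝ => ((ω p.1 0 : ℝ), p.2/2)) (Ici 0 ×ˢ Ici 0) := by
        apply ContinuousOn.prodMk
        · have hin : ContinuousOn (fun p : ℝ × ℝ => ((p.1 : ℝ), (0:ℝ))) (Ici 0 ×ˢ Ici 0) :=
            (continuous_fst.prodMk continuous_const).continuousOn
          exact hcont.comp hin (fun p hp => ⟨hp.1, m0⟩)
        · exact (continuous_snd.div_const 2).continuousOn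
      exact hcont.comp hg (fun p hp =>
        ⟨mi (hnn p.1 hp.1 0 m0), mi (div_nonneg hp.2 (by norm_num))⟩)
    have h2 : ContinuousOn (fun p : ℝ × ℝ => ω (ω p.1 (p.2/2)) 0) (Ici 0 ×ˢ Ici 0) := by
      have hg : ContinuousOn (fun p : ℝ × ℝ => ((ω p.1 (p.2/2) : ℝ), (0:ℝ))) (Ici 0 ×ˢ Ici 0) := by
        apply ContinuousOn.prodMk
        · exact hcont.comp
            ((continuous_fst.prodMk (continuous_snd.div_const 2)).continuousOn)
            (fun p hp => ⟨hp.1, mi (div_nonneg hp.2 (by norm_num))⟩)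
        · exact continuousOn_const
      exact hcont.comp hg (fun p hp =>
        ⟨mi (hnn p.1 hp.1 (p.2/2) (mi (div_nonneg hp.2 (by norm_num)))), m0⟩)
    exact h1.add h2
  · -- class K in first argument
    intro t ht
    have h2 : (t/2) ∈ Ici (0:ℝ) := mi (div_nonneg ht (by norm_num))
    constructor
    · intro a ha b hb hab
      dsimp only
      have l1 : ω (ω a 0) (t/2) < ω (ω b 0) (t/2) :=
        (hK (t/2) h2).1 (mi (hnn a ha 0 m0)) (mi (hnn b hb 0 m0))
          ((hK 0 m0).1 ha hb hab)
      have l2 : ω (ω a (t/2)) 0 < ω (ω b (t/2)) 0 :=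
        (hK 0 m0).1 (mi (hnn a ha (t/2) h2)) (mi (hnn b hb (t/2) h2))
          ((hK (t/2) h2).1 ha hb hab)
      linarith
    · simp [(hK 0 m0).2, (hK (t/2) h2).2]
  · -- nonnegativity
    intro s hs t ht
    have h2 : (t/2) ∈ Ici (0:ℝ) := mi (div_nonneg ht (by norm_num))
    exact add_nonneg (hnn _ (mi (hnn s hs 0 m0)) _ h2) (hnn _ (mi (hnn s hs _ h2)) 0 m0)
  · -- class L in second argument
    intro s hs
    have hs0 : (ω s 0) ∈ Ici (0:ℝ) := mi (hnn s hs 0 m0)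
    constructor
    · intro a ha b hb hab
      dsimp only
      have ha2 : (a/2) ∈ Ici (0:ℝ) := mi (div_nonneg ha (by norm_num))
      have hb2 : (b/2) ∈ Ici (0:ℝ) := mi (div_nonneg hb (by norm_num))
      have l1 : ω (ω s 0) (b/2) ≤ ω (ω s 0) (a/2) :=
        (hL (ω s 0) hs0).1 ha2 hb2 (by linarith)
      have l2 : ω (ω s (b/2)) 0 ≤ ω (ω s (a/2)) 0 := by
        have h : ω s (b/2) ≤ ω s (a/2) := (hL s hs).1 ha2 hb2 (by linarith)
        rcases eq_or_lt_of_le h with h | h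
        · rw [h]
        · exact le_of_lt ((hK 0 m0).1 (mi (hnn s hs _ hb2)) (mi (hnn s hs _ ha2)) h)
      linarith
    · have hhalf : Tendsto (fun t : ℝ => t/2) atTop atTop :=
        tendsto_id.atTop_div_const (by norm_num)
      have t1 : Tendsto (fun t => ω (ω s 0) (t/2)) atTop (nhds 0) :=
        (hL (ω s 0) hs0).2.comp hhalf
      have t2 : Tendsto (fun t => ω (ω s (t/2)) 0) atTop (nhds 0) := by
        have hc : ContinuousWithinAt (fun p : ℝ × ℝ => ω p.1 p.2)
            (Ici 0 ×ˢ Ici 0) (0, 0) := hcont (0,0) ⟨m0, m0⟩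
        have harg : Tendsto (fun t => ((ω s (t/2)), (0:ℝ))) atTop
            (nhdsWithin (0,0) (Ici 0 ×ˢ Ici 0)) := by
          rw [tendsto_nhdsWithin_iff]
          constructor
          · exact (((hL s hs).2.comp hhalf).prodMk_nhds tendsto_const_nhds)
          · filter_upwards [eventually_ge_atTop (0:ℝ)] with t ht
            exact ⟨mi (hnn s hs (t/2) (mi (div_nonneg ht (by norm_num)))), m0⟩
        have := hc.tendsto.comp harg
        simpa [Function.comp_def, (hK 0 m0).2] using this
      simpa using t1.add t2
  · -- the estimate
    intro r hr t ht τ hτ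
    obtain ⟨hτ0, hτt⟩ := hτ
    have h2 : (t/2) ∈ Ici (0:ℝ) := mi (div_nonneg ht (by norm_num))
    have h2' : (0:ℝ) ≤ t/2 := h2
    have hωrτ : (ω r τ) ∈ Ici (0:ℝ) := mi (hnn r hr τ (mi hτ0))
    have hωr2 : (ω r (t/2)) ∈ Ici (0:ℝ) := mi (hnn r hr _ h2)
    have hωr0 : (ω r 0) ∈ Ici (0:ℝ) := mi (hnn r hr 0 m0)
    rcases le_total τ (t/2) with hc | hc
    · -- τ ≤ t/2 : t - τ ≥ t/2
      have e1 : ω (ω r τ) (t - τ) ≤ ω (ω r τ) (t/2) :=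
        (hL (ω r τ) hωrτ).1 h2 (mi (by linarith)) (by linarith)
      have e2 : ω (ω r τ) (t/2) ≤ ω (ω r 0) (t/2) := by
        have h : ω r τ ≤ ω r 0 := (hL r hr).1 m0 (mi hτ0) hτ0
        rcases eq_or_lt_of_le h with h | h
        · rw [h]
        · exact le_of_lt ((hK (t/2) h2).1 hωrτ hωr0 h)
      have e3 : (0:ℝ) ≤ ω (ω r (t/2)) 0 := hnn _ hωr2 0 m0
      linarith
    · -- t/2 ≤ τ
      have e1 : ω (ω r τ) (t - τ) ≤ ω (ω r τ) 0 :=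
        (hL (ω r τ) hωrτ).1 m0 (mi (by linarith)) (by linarith)
      have e2 : ω (ω r τ) 0 ≤ ω (ω r (t/2)) 0 := by
        have h : ω r τ ≤ ω r (t/2) := (hL r hr).1 h2 (mi hτ0) hc
        rcases eq_or_lt_of_le h with h | h
        · rw [h]
        · exact le_of_lt ((hK 0 m0).1 hωrτ hωr2 h)
      have e3 : (0:ℝ) ≤ ω (ω r 0) (t/2) := hnn _ hωr0 _ h2
      linarith
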